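/- arXiv:1810.05036 — 2 statements merged into one kernel-verified Lean document; each statement's English description precedes it below -/
import Mathlib

section
/- If λ is a cardinal, j : V → M is an ultrapower embedding with M closed under λ-sequences, and D is a countably complete ultrafilter on an ordinal γ ≤ λ, and there is a semicomparison (k,i) : (M_D, M) → N of (j_D, j) such that k([id]_D) ∈ i(j[λ]), then D ∈ M. -/
open FirstOrder

namespace UAPaper

open Cardinal

/-- The universe of sets. -/
abbrev ZS : Type 1 := ZFSet.{0}

/-! ### The first-order language of set theory (one binary relation) -/

def setLang : Language where
  Functions := fun _ => Empty
  Relations := fun n => match n with | 2 => PUnit | _ => Empty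

def setStructure (α : Type*) (r : α → α → Prop) : setLang.Structure α where
  funMap := fun f _ => f.elim
  RelMap := fun {n} R v =>
    match n, R, v with
    | 2, _, v => r (v 0) (v 1)

/-- `j : α → β` is elementary with respect to the membership-like relations
`ra` and `rb`: it preserves the truth of all first-order formulas in the
language of set theory. -/
def ElemOn {α β : Type*} (ra : α → α → Prop) (rb : β → β → Prop) (j : α → β) : Prop :=
  letI := setStructure α ra
  letI := setStructure β rb
  ∀ (n : ℕ) (φ : setLang.Formula (Fin n)) (v : Fin n → α),
    φ.Realize (j ∘ v) ↔ φ.Realize v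

/-! ### ZFSet-coded basics -/

/-- `x` is a (von Neumann) ordinal. -/
def IsOrd (x : ZS) : Prop := x.IsTransitive ∧ ∀ y ∈ x, ZFSet.IsTransitive y

/-- ordinal comparison `a ≤ b`. -/
def zle (a b : ZS) : Prop := a ∈ b ∨ a = b

/-- `x` is a cardinal: an ordinal not in bijection with any smaller ordinal. -/
def IsCardZ (x : ZS) : Prop := IsOrd x ∧ ∀ y ∈ x, #y.toSet < #x.toSet

/-- `b` is the cardinal successor of `a`. -/
def CardSuccOf (a b : ZS) : Prop := IsCardZ b ∧ #b.toSet = Order.succ #a.toSet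

/-- The cofinality of the ordinal `δ` is at least `#κ`: every cofinal subset of `δ`
has cardinality at least that of `κ`. -/
def CofGE (δ κ : ZS) : Prop :=
  ∀ s : Set ZS, (∀ x ∈ s, x ∈ δ) → (∀ x, x ∈ δ → ∃ y ∈ s, x ∈ y ∨ x = y) →
    #κ.toSet ≤ #s

/-- The cofinality of the ordinal `α` is exactly (the cardinality of) `κ`. -/
def CofEq (α κ : ZS) : Prop :=
  CofGE α κ ∧ ∃ s : Set ZS, (∀ x ∈ s, x ∈ α) ∧
    (∀ x, x ∈ α → ∃ y ∈ s, x ∈ y ∨ x = y) ∧ #s ≤ #κ.toSet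

/-- `F` is a (set-coded) function with domain `A`. -/
def IsFunc (F A : ZS) : Prop :=
  (∀ p ∈ F, ∃ x, x ∈ A ∧ ∃ y, p = ZFSet.pair x y) ∧
  ∀ x, x ∈ A → ∃! y, ZFSet.pair x y ∈ F

/-- `F` is a set-coded function from `A` to `B`. -/
def IsFuncTo (F A B : ZS) : Prop :=
  IsFunc F A ∧ ∀ x y, ZFSet.pair x y ∈ F → y ∈ B

/-- The set-coded constant function on `A` with value `v`. -/
noncomputable def constFn (A v : ZS) : ZS :=
  @ZFSet.image (fun x => ZFSet.pair x v) (Classical.allZFSetDefinable _) A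

/-- The image `j[A]` of a set `A` under a class function `j`. -/
noncomputable def zimage (j : ZS → ZS) (A : ZS) : ZS :=
  @ZFSet.image j (Classical.allZFSetDefinable _) A

/-- A class `M` is transitive. -/
def IsTransClass (M : ZS → Prop) : Prop := ∀ x, M x → ∀ y ∈ x, M y

/-- `M` (a class) is closed under `λ`-sequences: every set function with domain `lam`
taking values in `M` belongs to `M`.  (`M^λ ⊆ M`.) -/
def ClosedUnderSeq (M : ZS → Prop) (lam : ZS) : Prop :=
  ∀ F, IsFunc F lam → (∀ x y, ZFSet.pair x y ∈ F → M y) → M F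

/-! ### Set-coded ultrafilters and ultrapowers -/

/-- `D` is an ultrafilter on the set `A`. -/
structure IsUF (D A : ZS) : Prop where
  subsets : ∀ X ∈ D, X ⊆ A
  univ_mem : A ∈ D
  empty_not_mem : ∅ ∉ D
  inter_mem : ∀ X ∈ D, ∀ Y ∈ D, X ∩ Y ∈ D
  superset_mem : ∀ X ∈ D, ∀ Y, X ⊆ Y → Y ⊆ A → Y ∈ D
  total : ∀ X, X ⊆ A → X ∈ D ∨ A \ X ∈ D

/-- `D` is a countably complete ultrafilter on `A`. -/
def IsCCUF (D A : ZS) : Prop :=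
  IsUF D A ∧ ∀ s : ℕ → ZS, (∀ n, s n ∈ D) →
    ZFSet.sep (fun x => ∀ n, x ∈ s n) A ∈ D

/-- `D` is `κ`-complete on `A`. -/
def IsKComplete (D A κ : ZS) : Prop :=
  ∀ s : Set ZS, (∀ X ∈ s, X ∈ D) → #s < #κ.toSet →
    ZFSet.sep (fun x => ∀ X ∈ s, x ∈ X) A ∈ D

/-- Functions (in `V`) with domain the set `A`. -/
def Fn (A : ZS) : Type 1 := {x : ZS // x ∈ A} → ZS

/-- The `D`-large set where `f` and `g` agree. -/
def agreeSet (A : ZS) (f g : Fn A) : ZS :=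
  ZFSet.sep (fun x => ∀ h : x ∈ A, f ⟨x, h⟩ = g ⟨x, h⟩) A

/-- The `D`-large set where `f x ∈ g x`. -/
def memSet (A : ZS) (f g : Fn A) : ZS :=
  ZFSet.sep (fun x => ∀ h : x ∈ A, f ⟨x, h⟩ ∈ g ⟨x, h⟩) A

/-- The ultrapower of the universe `V` by the coded ultrafilter `D` on `A`,
formed using all functions with domain `A`. -/
def Ult (D A : ZS) : Type 1 := Quot (fun f g : Fn A => agreeSet A f g ∈ D)

/-- Membership between elements of the ultrapower. -/
def memUlt (D A : ZS) (a b : Ult D A) : Prop :=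
  ∃ f g : Fn A, a = Quot.mk _ f ∧ b = Quot.mk _ g ∧ memSet A f g ∈ D

/-- The canonical ultrapower embedding `j_D : V → M_D` (at the quotient level). -/
def jUlt (D A : ZS) (x : ZS) : Ult D A := Quot.mk _ fun _ => x

/-- `[id]_D`, the element of the ultrapower represented by the identity function. -/
def idUlt (D A : ZS) : Ult D A := Quot.mk _ fun p => p.1

/-- `F` is a set-code for the function `f : A → V`. -/
def CodesFn (F A : ZS) (f : Fn A) : Prop :=
  (∀ p ∈ F, ∃ x, ∃ h : x ∈ A, p = ZFSet.pair x (f ⟨x, h⟩)) ∧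
  ∀ x, ∀ h : x ∈ A, ZFSet.pair x (f ⟨x, h⟩) ∈ F

/-- `RepIn M D A a f` : the set `a` is the transitive collapse of the point of the
ultrapower of `M` by `D` (using functions coded in `M`) represented by `f`.
Defined by ∈-recursion.  Taking `M = V` (i.e. `fun _ => True`) gives the
full ultrapower of the universe. -/
def RepIn (M : ZS → Prop) (D A : ZS) : ZS → Fn A → Prop :=
  ZFSet.mem_wf.fix
    (C := fun _ => Fn A → Prop)
    (fun a rec f =>
      (∀ b, ∀ hb : b ∈ a, ∃ g : Fn A, (∃ G, M G ∧ CodesFn G A g) ∧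
        memSet A g f ∈ D ∧ rec b hb g) ∧
      (∀ g : Fn A, (∃ G, M G ∧ CodesFn G A g) → memSet A g f ∈ D →
        ∃ b, ∃ hb : b ∈ a, rec b hb g))

/-- `a` is the collapse of the point of `M_D = Ult(V, D)` represented by `f`. -/
def Rep (D A : ZS) (a : ZS) (f : Fn A) : Prop :=
  RepIn (fun _ => True) D A a f

/-- The class `M_D`: the transitive collapse of the ultrapower of `V` by `D`. -/
def InUlt (D A : ZS) (a : ZS) : Prop := ∃ f : Fn A, Rep D A a f

/-- Membership relation on (the subclass of `V` given by) a class `M`. -/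
def ClassMem (M : ZS → Prop) : {x : ZS // M x} → {x : ZS // M x} → Prop :=
  fun a b => a.1 ∈ b.1

/-- `i` restricts to an elementary embedding from the class `M` to the class `N`. -/
def IsElemClassEmb (M N : ZS → Prop) (i : ZS → ZS) : Prop :=
  ∃ h : ∀ x, M x → N (i x),
    ElemOn (ClassMem M) (ClassMem N) (fun a => ⟨i a.1, h a.1 a.2⟩)

/-- `i : M → N` is an internal ultrapower embedding of the (transitive) class `M`:
there are `A, D ∈ M` with `D` a countably complete ultrafilter on `A` such that
`N` is the (collapsed) ultrapower of `M` by `D` computed using functions in `M`,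
and `i` is the associated canonical embedding. -/
def IsInternalUltrapowerEmb (M N : ZS → Prop) (i : ZS → ZS) : Prop :=
  ∃ A D : ZS, M A ∧ M D ∧ IsCCUF D A ∧
    (∀ a, N a ↔ ∃ f : Fn A, (∃ G, M G ∧ CodesFn G A f) ∧ RepIn M D A a f) ∧
    (∀ x, M x → RepIn M D A (i x) (fun _ => x))

/-- `j : V → M` is an ultrapower embedding of the universe by a countably
complete ultrafilter. -/
def IsUltrapowerEmbV (M : ZS → Prop) (j : ZS → ZS) : Prop :=
  IsInternalUltrapowerEmb (fun _ => True) M j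

/-- `(i0, i1) : (M0, M1) → N` is a semicomparison of `(j0 : V → M0, j1 : V → M1)`:
`i0` is elementary, `i1` is an internal ultrapower embedding of `M1`, and
`i0 ∘ j0 = i1 ∘ j1`. -/
structure Semicomparison (M0 M1 N : ZS → Prop) (j0 j1 i0 i1 : ZS → ZS) : Prop where
  elem0 : IsElemClassEmb M0 N i0
  internal1 : IsInternalUltrapowerEmb M1 N i1
  comm : ∀ x, i0 (j0 x) = i1 (j1 x)

/-- A comparison of `(j0, j1)` : both `(i0,i1)` and `(i1,i0)` are semicomparisons. -/
def Comparison (M0 M1 N : ZS → Prop) (j0 j1 i0 i1 : ZS → ZS) : Prop :=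
  Semicomparison M0 M1 N j0 j1 i0 i1 ∧ Semicomparison M1 M0 N j1 j0 i1 i0

/-- The Ultrapower Axiom: every pair of ultrapower embeddings admits a comparison. -/
def UA : Prop :=
  ∀ (M0 M1 : ZS → Prop) (j0 j1 : ZS → ZS),
    IsUltrapowerEmbV M0 j0 → IsUltrapowerEmbV M1 j1 →
    ∃ (N : ZS → Prop) (i0 i1 : ZS → ZS),
      Comparison M0 M1 N j0 j1 i0 i1

/-! ### Supercompactness and normal fine ultrafilters -/

/-- An elementary embedding of `V` into a transitive class `M`. -/
def IsElemEmbV (M : ZS → Prop) (j : ZS → ZS) : Prop :=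
  IsTransClass M ∧ IsElemClassEmb (fun _ => True) M j

/-- `κ` is `lam`-supercompact: there is an elementary `j : V → M` with critical
point `κ`, `j(κ) > lam`, and `M` closed under `lam`-sequences. -/
def IsSupercompact (κ lam : ZS) : Prop :=
  ∃ (M : ZS → Prop) (j : ZS → ZS), IsElemEmbV M j ∧
    (∀ x ∈ κ, j x = x) ∧ κ ∈ j κ ∧ lam ∈ j κ ∧ ClosedUnderSeq M lam

/-- `P_κ(δ)` : the set of subsets of `δ` of cardinality less than `κ`. -/
noncomputable def Pk (κ δ : ZS) : ZS :=
  ZFSet.sep (fun x => #x.toSet < #κ.toSet) (ZFSet.powerset δ)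

/-- `D` is a normal fine `κ`-complete ultrafilter on `P_κ(δ)`. -/
structure IsNFUF (D κ δ : ZS) : Prop where
  uf : IsUF D (Pk κ δ)
  cc : IsCCUF D (Pk κ δ)
  kcomplete : IsKComplete D (Pk κ δ) κ
  fine : ∀ α ∈ δ, ZFSet.sep (fun σ => α ∈ σ) (Pk κ δ) ∈ D
  normal : ∀ f : ZS → ZS,
    ZFSet.sep (fun σ => f σ ∈ σ) (Pk κ δ) ∈ D →
    ∃ α ∈ δ, ZFSet.sep (fun σ => f σ = α) (Pk κ δ) ∈ D

end UAPaper

namespace UAPaper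

open Cardinal

/-- `D` is uniform on `A`: every member has full cardinality. -/
def UniformOn (D A : ZS) : Prop := ∀ X ∈ D, #X.toSet = #A.toSet

/-- A uniform ultrafilter `D` on the cardinal `μ` is seed-minimal if no regressive
function is one-to-one on a `D`-large set. -/
def SeedMinimal (D μ : ZS) : Prop :=
  ∀ f : ZS → ZS, (∀ x, x ∈ μ → x ≠ ∅ → f x ∈ x) →
    ∀ X ∈ D, ¬ Set.InjOn f X.toSet

/-- `D` (on `A`) and `E` (on `B`) are isomorphic in the Rudin–Keisler sense, via a
map which is a bijection between sets in the respective ultrafilters. -/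
def UFIso (D A E B : ZS) : Prop :=
  ∃ (h : ZS → ZS) (X Y : ZS), X ∈ D ∧ Y ∈ E ∧
    Set.BijOn h X.toSet Y.toSet ∧
    ∀ Z : ZS, Z ⊆ B → (Z ∈ E ↔ ZFSet.sep (fun x => h x ∈ Z) A ∈ D)

/-! ### Clubs, stationary sets and diamond -/

/-- A club subset of the (ZFSet) ordinal `lam`. -/
def ZClub (lam : ZS) (C : Set ZS) : Prop :=
  (∀ x ∈ C, x ∈ lam) ∧
  (∀ x, x ∈ lam → ∃ y ∈ C, x ∈ y ∨ x = y) ∧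
  (∀ β, β ∈ lam → β ≠ ∅ → (∀ z ∈ β, ∃ y ∈ C, y ∈ β ∧ (z ∈ y ∨ z = y)) → β ∈ C)

/-- A stationary subset of the (ZFSet) ordinal `lam`. -/
def ZStationary (lam : ZS) (S : Set ZS) : Prop :=
  (∀ x ∈ S, x ∈ lam) ∧ ∀ C, ZClub lam C → (S ∩ C).Nonempty

/-- Jensen's diamond on the set `S ⊆ lam` (for ZFSet ordinals). -/
def ZDiamond (lam : ZS) (S : Set ZS) : Prop :=
  ∃ A : ZS → ZS, (∀ α, α ∈ S → A α ⊆ α) ∧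
    ∀ X : ZS, X ⊆ lam → ZStationary lam {α | α ∈ S ∧ X ∩ α = A α}

/-- A club subset of the ordinal `lam` (Mathlib ordinals). -/
def IsClub (lam : Ordinal) (C : Set Ordinal) : Prop :=
  (∀ α ∈ C, α < lam) ∧
  (∀ α, α < lam → ∃ β ∈ C, α < β) ∧
  (∀ β, β < lam → 0 < β → (∀ γ, γ < β → ∃ δ ∈ C, γ < δ ∧ δ < β) → β ∈ C)

/-- A stationary subset of the ordinal `lam`. -/
def IsStationary (lam : Ordinal) (S : Set Ordinal) : Prop :=
  (∀ α ∈ S, α < lam) ∧ ∀ C, IsClub lam C → (S ∩ C).Nonempty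

/-- Jensen's diamond principle `◇(S)` for `S ⊆ lam`. -/
def Diamond (lam : Ordinal) (S : Set Ordinal) : Prop :=
  ∃ A : Ordinal → Set Ordinal, (∀ α ∈ S, A α ⊆ Set.Iio α) ∧
    ∀ X : Set Ordinal, X ⊆ Set.Iio lam →
      IsStationary lam {α ∈ S | X ∩ Set.Iio α = A α}

/-- Kunen's `◇⁻(S)` for `S ⊆ lam`. -/
def DiamondMinus (lam : Ordinal) (S : Set Ordinal) : Prop :=
  ∃ 𝒜 : Ordinal → Set (Set Ordinal),
    (∀ α ∈ S, ∀ a ∈ 𝒜 α, a ⊆ Set.Iio α) ∧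
    (∀ α ∈ S, #(𝒜 α) ≤ #(Set.Iio α)) ∧
    ∀ X : Set Ordinal, X ⊆ Set.Iio lam →
      IsStationary lam {α ∈ S | X ∩ Set.Iio α ∈ 𝒜 α}

end UAPaper

namespace UAPaper

open Cardinal

open ZFSet

/-! ### Auxiliary: large sets for an ultrafilter -/

/-- The set of points of `A` satisfying `P`. -/
def LS (A : ZS) (P : {x : ZS // x ∈ A} → Prop) : ZS :=
  ZFSet.sep (fun x => ∀ h : x ∈ A, P ⟨x, h⟩) A

theorem mem_LS {A : ZS} {P : {x : ZS // x ∈ A} → Prop} {x : ZS} :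
    x ∈ LS A P ↔ ∃ h : x ∈ A, P ⟨x, h⟩ := by
  simp only [LS, ZFSet.mem_sep]
  constructor
  · rintro ⟨hx, hP⟩
    exact ⟨hx, hP hx⟩
  · rintro ⟨hx, hP⟩
    exact ⟨hx, fun _ => hP⟩

theorem memSet_eq {A : ZS} (f g : Fn A) : memSet A f g = LS A fun p => f p ∈ g p := rfl

theorem agreeSet_eq {A : ZS} (f g : Fn A) : agreeSet A f g = LS A fun p => f p = g p := rfl

theorem LS_subset {A : ZS} {P : {x : ZS // x ∈ A} → Prop} : LS A P ⊆ A := by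
  intro z hz
  exact (mem_LS.1 hz).1

section UF

variable {D A : ZS} {P Q : {x : ZS // x ∈ A} → Prop}

theorem LS_mono (hUF : IsUF D A) (h1 : LS A P ∈ D) (himp : ∀ p, P p → Q p) : LS A Q ∈ D := by
  refine hUF.superset_mem _ h1 _ (fun z hz => ?_) LS_subset
  obtain ⟨h, hP⟩ := mem_LS.1 hz
  exact mem_LS.2 ⟨h, himp _ hP⟩

theorem LS_and (hUF : IsUF D A) (hP : LS A P ∈ D) (hQ : LS A Q ∈ D) : LS A (fun p => P p ∧ Q p) ∈ D := by
  refine hUF.superset_mem _ (hUF.inter_mem _ hP _ hQ) _ (fun z hz => ?_) LS_subset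
  rw [ZFSet.mem_inter] at hz
  obtain ⟨h, h1⟩ := mem_LS.1 hz.1
  obtain ⟨h', h2⟩ := mem_LS.1 hz.2
  exact mem_LS.2 ⟨h, h1, h2⟩

theorem LS_of_all (hUF : IsUF D A) (hall : ∀ p, P p) : LS A P ∈ D := by
  have : LS A P = A := by
    apply ZFSet.ext
    intro z
    exact ⟨fun hz => LS_subset hz, fun hz => mem_LS.2 ⟨hz, hall _⟩⟩
  rw [this]; exact hUF.univ_mem

theorem LS_elim (hUF : IsUF D A) (h : LS A P ∈ D) (hnone : ∀ p, ¬ P p) : False := by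
  have : LS A P = ∅ := by
    apply ZFSet.ext
    intro z
    simp only [ZFSet.notMem_empty, iff_false]
    intro hz
    obtain ⟨hzA, hP⟩ := mem_LS.1 hz
    exact hnone _ hP
  rw [this] at h
  exact hUF.empty_not_mem h

theorem LS_not_both (hUF : IsUF D A) (hP : LS A P ∈ D) (hnP : LS A (fun p => ¬ P p) ∈ D) : False :=
  LS_elim hUF (LS_and hUF hP hnP) (fun p hp => hp.2 hp.1)

theorem LS_total (hUF : IsUF D A) (P : {x : ZS // x ∈ A} → Prop) :
    LS A P ∈ D ∨ LS A (fun p => ¬ P p) ∈ D := by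
  rcases hUF.total (LS A P) LS_subset with h | h
  · exact Or.inl h
  · refine Or.inr (hUF.superset_mem _ h _ (fun z hz => ?_) LS_subset)
    rw [ZFSet.mem_sdiff] at hz
    refine mem_LS.2 ⟨hz.1, fun hP => hz.2 (mem_LS.2 ⟨hz.1, hP⟩)⟩

end UF

/-! ### Auxiliary: representation (collapse) lemmas -/

/-- `g` has a set-code in the class `Mc`. -/
def Coded (Mc : ZS → Prop) (A : ZS) (g : Fn A) : Prop := ∃ G, Mc G ∧ CodesFn G A g

section RepL

variable {Mc : ZS → Prop} {D A : ZS}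

theorem repin_iff {a : ZS} {f : Fn A} :
    RepIn Mc D A a f ↔
      ((∀ b ∈ a, ∃ g : Fn A, Coded Mc A g ∧ memSet A g f ∈ D ∧ RepIn Mc D A b g) ∧
       (∀ g : Fn A, Coded Mc A g → memSet A g f ∈ D → ∃ b, b ∈ a ∧ RepIn Mc D A b g)) := by
  unfold RepIn Coded
  rw [WellFounded.fix_eq]
  constructor
  · rintro ⟨h1, h2⟩
    refine ⟨fun b hb => h1 b hb, fun g hg hm => ?_⟩
    obtain ⟨b, hb, hr⟩ := h2 g hg hm
    exact ⟨b, hb, hr⟩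
  · rintro ⟨h1, h2⟩
    refine ⟨fun b hb => h1 b hb, fun g hg hm => ?_⟩
    obtain ⟨b, hb, hr⟩ := h2 g hg hm
    exact ⟨b, hb, hr⟩

theorem rep_unique {a : ZS} : ∀ {f : Fn A} {b : ZS},
    RepIn Mc D A a f → RepIn Mc D A b f → a = b := by
  induction a using ZFSet.inductionOn with
  | _ a IH =>
    intro f b ha hb
    obtain ⟨ha1, ha2⟩ := repin_iff.1 ha
    obtain ⟨hb1, hb2⟩ := repin_iff.1 hb
    apply ZFSet.ext
    intro c
    constructor
    · intro hc
      obtain ⟨g, hgc, hgm, hgr⟩ := ha1 c hc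
      obtain ⟨c', hc', hr'⟩ := hb2 g hgc hgm
      exact (IH c hc hgr hr') ▸ hc'
    · intro hc
      obtain ⟨g, hgc, hgm, hgr⟩ := hb1 c hc
      obtain ⟨c', hc', hr'⟩ := ha2 g hgc hgm
      exact (IH c' hc' hr' hgr) ▸ hc'

theorem rep_congr (hUF : IsUF D A) {f f' : Fn A} (hag : agreeSet A f f' ∈ D) {a : ZS}
    (ha : RepIn Mc D A a f) : RepIn Mc D A a f' := by
  rw [agreeSet_eq] at hag
  obtain ⟨h1, h2⟩ := repin_iff.1 ha
  refine repin_iff.2 ⟨fun b hb => ?_, fun g hgc hgm => ?_⟩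
  · obtain ⟨g, hgc, hgm, hgr⟩ := h1 b hb
    refine ⟨g, hgc, ?_, hgr⟩
    rw [memSet_eq] at hgm ⊢
    exact LS_mono hUF (LS_and hUF hgm hag) (fun p hp => hp.2 ▸ hp.1)
  · refine h2 g hgc ?_
    rw [memSet_eq] at hgm ⊢
    exact LS_mono hUF (LS_and hUF hgm hag) (fun p hp => hp.2 ▸ hp.1)

theorem mem_back {a b : ZS} {f h : Fn A} (hf : RepIn Mc D A a f) (hh : RepIn Mc D A b h)
    (hcod : Coded Mc A f) (hm : memSet A f h ∈ D) : a ∈ b := by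
  obtain ⟨c, hc, hr⟩ := (repin_iff.1 hh).2 f hcod hm
  exact (rep_unique hf hr) ▸ hc

theorem rep_agree (hUF : IsUF D A) (hcode : ∀ g : Fn A, Coded Mc A g) {a : ZS} : ∀ {f g : Fn A},
    RepIn Mc D A a f → RepIn Mc D A a g → agreeSet A f g ∈ D := by
  induction a using ZFSet.inductionOn with
  | _ a IH =>
    intro f g hf hg
    by_contra hno
    rw [agreeSet_eq] at hno
    have hne : LS A (fun p => ¬ f p = g p) ∈ D := (LS_total hUF _).resolve_left hno
    classical
    set h : Fn A := fun p =>
      if hw : ∃ w, (w ∈ f p ∧ w ∉ g p) ∨ (w ∈ g p ∧ w ∉ f p) then Classical.choose hw else ∅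
      with hhdef
    have hwit : ∀ p : {x : ZS // x ∈ A}, f p ≠ g p →
        (h p ∈ f p ∧ h p ∉ g p) ∨ (h p ∈ g p ∧ h p ∉ f p) := by
      intro p hne'
      have hw : ∃ w, (w ∈ f p ∧ w ∉ g p) ∨ (w ∈ g p ∧ w ∉ f p) := by
        by_contra hnw
        push_neg at hnw
        exact hne' (ZFSet.ext fun w => ⟨fun hw' => (hnw w).1 hw', fun hw' => (hnw w).2 hw'⟩)
      · rw [hhdef]
        simp only [dif_pos hw]
        exact Classical.choose_spec hw
    have key : ∀ f' g' : Fn A, RepIn Mc D A a f' → RepIn Mc D A a g' →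
        LS A (fun p => h p ∈ f' p ∧ h p ∉ g' p) ∈ D → False := by
      intro f' g' hf' hg' hbig
      have hmf : memSet A h f' ∈ D := by
        rw [memSet_eq]; exact LS_mono hUF hbig (fun p hp => hp.1)
      obtain ⟨c, hc, hcr⟩ := (repin_iff.1 hf').2 h (hcode h) hmf
      obtain ⟨g₁, hg₁c, hg₁m, hg₁r⟩ := (repin_iff.1 hg').1 c hc
      have hagr : agreeSet A h g₁ ∈ D := IH c hc hcr hg₁r
      rw [agreeSet_eq] at hagr
      rw [memSet_eq] at hg₁m
      have hmg : LS A (fun p => h p ∈ g' p) ∈ D :=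
        LS_mono hUF (LS_and hUF hagr hg₁m) (fun p hp => hp.1 ▸ hp.2)
      exact LS_not_both hUF (LS_and hUF hbig hmg)
        (P := fun p => (h p ∈ f' p ∧ h p ∉ g' p) ∧ h p ∈ g' p) (by
          exact LS_of_all hUF (fun p hp => hp.1.2 hp.2))
    rcases LS_total hUF (fun p => h p ∈ f p ∧ h p ∉ g p) with hc1 | hc1
    · exact key f g hf hg hc1
    · refine key g f hg hf ?_
      refine LS_mono hUF (LS_and hUF hne hc1) (fun p hp => ?_)
      rcases hwit p hp.1 with hw | hw
      · exact (hp.2 hw).elim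
      · exact hw

theorem mem_fwd (hUF : IsUF D A) (hcode : ∀ g : Fn A, Coded Mc A g) {a b : ZS} {f h : Fn A} (hf : RepIn Mc D A a f) (hh : RepIn Mc D A b h)
    (hab : a ∈ b) : memSet A f h ∈ D := by
  obtain ⟨g, hgc, hgm, hgr⟩ := (repin_iff.1 hh).1 a hab
  have hagr := rep_agree hUF hcode hf hgr
  rw [agreeSet_eq] at hagr
  rw [memSet_eq] at hgm ⊢
  exact LS_mono hUF (LS_and hUF hagr hgm) (fun p hp => hp.1 ▸ hp.2)

theorem empty_rep (hUF : IsUF D A) : RepIn Mc D A ∅ (fun _ => ∅) := by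
  refine repin_iff.2 ⟨fun b hb => (ZFSet.notMem_empty _ hb).elim, fun g hgc hgm => ?_⟩
  erw [memSet_eq] at hgm
  exact (LS_elim hUF hgm (fun p hp => ZFSet.notMem_empty _ hp)).elim

theorem insert_rep (hUF : IsUF D A) (hcode : ∀ g : Fn A, Coded Mc A g) {x s : ZS} {u t : Fn A} (hx : RepIn Mc D A x u) (hs : RepIn Mc D A s t) :
    RepIn Mc D A (insert x s) (fun p => insert (u p) (t p)) := by
  refine repin_iff.2 ⟨fun b hb => ?_, fun g hgc hgm => ?_⟩
  · rcases ZFSet.mem_insert_iff.1 hb with rfl | hb'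
    · exact ⟨u, hcode u, by
        erw [memSet_eq]; exact LS_of_all hUF (fun p => ZFSet.mem_insert _ _), hx⟩
    · obtain ⟨g, hgc, hgm, hgr⟩ := (repin_iff.1 hs).1 b hb'
      refine ⟨g, hgc, ?_, hgr⟩
      erw [memSet_eq] at hgm ⊢
      exact LS_mono hUF hgm (fun p hp => ZFSet.mem_insert_of_mem _ hp)
  · erw [memSet_eq] at hgm
    rcases LS_total hUF (fun p => g p ∈ t p) with hc | hc
    · obtain ⟨b, hb, hbr⟩ := (repin_iff.1 hs).2 g hgc (by rw [memSet_eq]; exact hc)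
      exact ⟨b, ZFSet.mem_insert_of_mem _ hb, hbr⟩
    · have hag : agreeSet A g u ∈ D := by
        rw [agreeSet_eq]
        refine LS_mono hUF (LS_and hUF hgm hc) (fun p hp => ?_)
        rcases ZFSet.mem_insert_iff.1 hp.1 with h' | h'
        · exact h'
        · exact (hp.2 h').elim
      exact ⟨x, ZFSet.mem_insert _ _, rep_congr hUF (by
        rw [agreeSet_eq] at hag ⊢
        exact LS_mono hUF hag (fun p hp => hp.symm)) hx⟩

theorem pair_rep (hUF : IsUF D A) (hcode : ∀ g : Fn A, Coded Mc A g) {x y : ZS} {u v : Fn A} (hx : RepIn Mc D A x u) (hy : RepIn Mc D A y v) :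
    RepIn Mc D A (ZFSet.pair x y) (fun p => ZFSet.pair (u p) (v p)) := by
  have h1 : RepIn Mc D A ({x} : ZFSet) (fun p => ({u p} : ZFSet)) := by
    have := insert_rep hUF hcode hx (empty_rep hUF)
    exact this
  have h2 : RepIn Mc D A ({x, y} : ZFSet) (fun p => ({u p, v p} : ZFSet)) :=
    insert_rep hUF hcode hx (insert_rep hUF hcode hy (empty_rep hUF))
  exact insert_rep hUF hcode h1 (insert_rep hUF hcode h2 (empty_rep hUF))

theorem sUnion_rep (hUF : IsUF D A) (hcode : ∀ g : Fn A, Coded Mc A g) {x : ZS} {f : Fn A} (hx : RepIn Mc D A x f) :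
    RepIn Mc D A (⋃₀ x : ZFSet) (fun p => (⋃₀ (f p) : ZFSet)) := by
  refine repin_iff.2 ⟨fun b hb => ?_, fun g hgc hgm => ?_⟩
  · obtain ⟨c, hcx, hbc⟩ := ZFSet.mem_sUnion.1 hb
    obtain ⟨gc, hgcc, hgcm, hgcr⟩ := (repin_iff.1 hx).1 c hcx
    obtain ⟨gb, hgbc, hgbm, hgbr⟩ := (repin_iff.1 hgcr).1 b hbc
    refine ⟨gb, hgbc, ?_, hgbr⟩
    erw [memSet_eq] at hgcm hgbm ⊢
    exact LS_mono hUF (LS_and hUF hgbm hgcm)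
      (fun p hp => ZFSet.mem_sUnion_of_mem hp.1 hp.2)
  · erw [memSet_eq] at hgm
    classical
    set w : Fn A := fun p => if hw : ∃ z, z ∈ f p ∧ g p ∈ z then Classical.choose hw else ∅
      with hwdef
    have hwspec : LS A (fun p => w p ∈ f p ∧ g p ∈ w p) ∈ D := by
      refine LS_mono hUF hgm (fun p hp => ?_)
      obtain ⟨z, hz, hgz⟩ := ZFSet.mem_sUnion.1 hp
      have hw : ∃ z, z ∈ f p ∧ g p ∈ z := ⟨z, hz, hgz⟩
      rw [hwdef]; simp only [dif_pos hw]
      exact Classical.choose_spec hw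
    obtain ⟨c, hcx, hcr⟩ := (repin_iff.1 hx).2 w (hcode w) (by
      rw [memSet_eq]; exact LS_mono hUF hwspec (fun p hp => hp.1))
    obtain ⟨b, hbc, hbr⟩ := (repin_iff.1 hcr).2 g hgc (by
      rw [memSet_eq]; exact LS_mono hUF hwspec (fun p hp => hp.2))
    exact ⟨b, ZFSet.mem_sUnion_of_mem hbc hcx, hbr⟩

end RepL

theorem codes_exist (A : ZS) (g : Fn A) : ∃ G, CodesFn G A g := by
  classical
  refine ⟨zimage (fun x => ZFSet.pair x (if h : x ∈ A then g ⟨x, h⟩ else ∅)) A, ?_, ?_⟩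
  · intro p hp
    obtain ⟨x, hx, hpx⟩ := (@ZFSet.mem_image _ (Classical.allZFSetDefinable _) A p).1 hp
    exact ⟨x, hx, by rw [← hpx, dif_pos hx]⟩
  · intro x h
    refine (@ZFSet.mem_image _ (Classical.allZFSetDefinable _) A _).2 ⟨x, h, by rw [dif_pos h]⟩

theorem mem_zimage {f : ZS → ZS} {A y : ZS} :
    y ∈ zimage f A ↔ ∃ x ∈ A, f x = y :=
  @ZFSet.mem_image _ (Classical.allZFSetDefinable _) A y

/-! ### Auxiliary: ordinals -/

theorem isOrd_mem {x y : ZS} (h : IsOrd x) (hy : y ∈ x) : IsOrd y :=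
  ⟨h.2 y hy, fun z hz => h.2 z (h.1.mem_trans hz hy)⟩

theorem ord_tri : ∀ a b : ZS, IsOrd a → IsOrd b → a ∈ b ∨ a = b ∨ b ∈ a := by
  intro a
  induction a using ZFSet.inductionOn with
  | _ a IHa =>
    intro b
    induction b using ZFSet.inductionOn with
    | _ b IHb =>
      intro ha hb
      by_cases hab : a ∈ b
      · exact Or.inl hab
      by_cases hba : b ∈ a
      · exact Or.inr (Or.inr hba)
      refine Or.inr (Or.inl (ZFSet.ext fun c => ⟨fun hc => ?_, fun hc => ?_⟩))
      · rcases IHa c hc b (isOrd_mem ha hc) hb with h | h | h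
        · exact h
        · exact absurd (h ▸ hc) hba
        · exact absurd (ha.1.mem_trans h hc) hba
      · rcases IHb c hc ha (isOrd_mem hb hc) with h | h | h
        · exact absurd (hb.1.mem_trans h hc) hab
        · exact absurd (h ▸ hc) hab
        · exact h


/-- First attempt lemma. -/
theorem statement1 (lam : ZS) (hlam : IsCardZ lam)
    (M : ZS → Prop) (j : ZS → ZS) (hj : IsUltrapowerEmbV M j)
    (hclosed : ClosedUnderSeq M lam)
    (γ D : ZS) (hγ : IsOrd γ) (hgle : zle γ lam) (hD : IsCCUF D γ)
    (jD : ZS → ZS) (hjD : ∀ x, Rep D γ (jD x) (fun _ => x))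
    (ξ : ZS) (hξ : Rep D γ ξ (fun p => p.1))
    (N : ZS → Prop) (k i : ZS → ZS)
    (hsemi : Semicomparison (InUlt D γ) M N jD j k i)
    (hseed : k ξ ∈ i (zimage j lam)) :
    M D := by
  classical
  obtain ⟨A0, D0, -, -, hccD0, hMchar, hjrep0⟩ := hj
  have hjrep : ∀ x : ZS, RepIn (fun _ => True) D0 A0 (j x) (fun _ => x) :=
    fun x => hjrep0 x trivial
  have hUF0 : IsUF D0 A0 := hccD0.1
  have hcode0 : ∀ g : Fn A0, Coded (fun _ => True) A0 g := fun g => by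
    obtain ⟨G, hG⟩ := codes_exist A0 g
    exact ⟨G, trivial, hG⟩
  have hMrep : ∀ {x : ZS}, M x → ∃ f : Fn A0, RepIn (fun _ => True) D0 A0 x f := by
    intro x hx
    obtain ⟨f, -, hf⟩ := (hMchar x).1 hx
    exact ⟨f, hf⟩
  have hMj : ∀ x : ZS, M (j x) := fun x => (hMchar _).2 ⟨fun _ => x, hcode0 _, hjrep x⟩
  have hMtrans : ∀ {x y : ZS}, M x → y ∈ x → M y := by
    intro x y hx hyx
    obtain ⟨f, hf⟩ := hMrep hx
    obtain ⟨g, hgc, hgm, hgr⟩ := (repin_iff.1 hf).1 y hyx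
    exact (hMchar y).2 ⟨g, hgc, hgr⟩
  have hjmem : ∀ {x y : ZS}, x ∈ y → j x ∈ j y := by
    intro x y hxy
    refine mem_back (hjrep x) (hjrep y) (hcode0 _) ?_
    erw [memSet_eq]
    exact LS_of_all hUF0 (fun p => hxy)
  have hjmem' : ∀ {x y : ZS}, j x ∈ j y → x ∈ y := by
    intro x y h
    have hm := mem_fwd hUF0 hcode0 (hjrep x) (hjrep y) h
    erw [memSet_eq] at hm
    by_contra hn
    exact LS_elim hUF0 hm (fun p hp => hn hp)
  have hjtrans : ∀ {x : ZS}, x.IsTransitive → ∀ {b c : ZS}, b ∈ j x → c ∈ b → c ∈ j x := by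
    intro x hx b c hb hc
    obtain ⟨g, hgc, hgm, hgr⟩ := (repin_iff.1 (hjrep x)).1 b hb
    obtain ⟨h, hhc, hhm, hhr⟩ := (repin_iff.1 hgr).1 c hc
    refine mem_back hhr (hjrep x) hhc ?_
    erw [memSet_eq] at hgm hhm ⊢
    exact LS_mono hUF0 (LS_and hUF0 hhm hgm) (fun p hp => hx.mem_trans hp.1 hp.2)
  have hjOrd : ∀ {x : ZS}, IsOrd x → IsOrd (j x) := by
    intro x hx
    constructor
    · intro b hb c hc
      exact hjtrans hx.1 hb hc
    · intro b hb
      obtain ⟨g, hgc, hgm, hgr⟩ := (repin_iff.1 (hjrep x)).1 b hb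
      intro c hcb c' hc'
      obtain ⟨h, hhc, hhm, hhr⟩ := (repin_iff.1 hgr).1 c hcb
      obtain ⟨h', hh'c, hh'm, hh'r⟩ := (repin_iff.1 hhr).1 c' hc'
      refine mem_back hh'r hgr hh'c ?_
      erw [memSet_eq] at hgm hhm hh'm ⊢
      refine LS_mono hUF0 (LS_and hUF0 hh'm (LS_and hUF0 hhm hgm)) (fun p hp => ?_)
      exact (hx.2 _ hp.2.2).mem_trans hp.1 hp.2.1
  have hzle : ∀ x : ZS, IsOrd x → zle x (j x) := by
    intro x
    induction x using ZFSet.inductionOn with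
    | _ x IH =>
      intro hx
      have hsub : x ⊆ j x := by
        intro δ hδ
        rcases IH δ hδ (isOrd_mem hx hδ) with h | h
        · exact hjtrans hx.1 (hjmem hδ) h
        · exact h ▸ hjmem hδ
      rcases ord_tri x (j x) hx (hjOrd hx) with h | h | h
      · exact Or.inl h
      · exact Or.inr h
      · exact absurd (hsub h) (ZFSet.mem_irrefl _)
  have hMord : ∀ {x : ZS}, IsOrd x → M x := by
    intro x hx
    rcases hzle x hx with h | h
    · exact hMtrans (hMj x) h
    · rw [h]; exact hMj x
  have hlamOrd : IsOrd lam := hlam.1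
  have hγlam : γ ⊆ lam := by
    rcases hgle with h | h
    · exact hlamOrd.1.subset_of_mem h
    · rw [h]
  obtain ⟨fγ, hfγ⟩ := hMrep (hMord hγ)
  -- the function F = j ↾ lam, as a set
  set F : ZS := zimage (fun α => ZFSet.pair α (j α)) lam with hFdef
  have hpairF : ∀ {α y : ZS}, ZFSet.pair α y ∈ F ↔ α ∈ lam ∧ y = j α := by
    intro α y
    rw [hFdef, mem_zimage]
    constructor
    · rintro ⟨β, hβ, hp⟩
      obtain ⟨rfl, h2⟩ := ZFSet.pair_inj.1 hp.symm
      exact ⟨hβ, h2⟩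
    · rintro ⟨h1, rfl⟩
      exact ⟨α, h1, rfl⟩
  have hMF : M F := by
    apply hclosed
    · constructor
      · intro p hp
        rw [hFdef, mem_zimage] at hp
        obtain ⟨α, hα, rfl⟩ := hp
        exact ⟨α, hα, j α, rfl⟩
      · intro x hx
        refine ⟨j x, hpairF.2 ⟨hx, rfl⟩, ?_⟩
        intro y hy
        exact (hpairF.1 hy).2
    · intro x y hxy
      obtain ⟨-, rfl⟩ := hpairF.1 hxy
      exact hMj x
  obtain ⟨fF, hfF⟩ := hMrep hMF
  have hFmem : ∀ {α : ZS}, α ∈ lam → ∀ fα : Fn A0, RepIn (fun _ => True) D0 A0 α fα →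
      LS A0 (fun p => ZFSet.pair (fα p) α ∈ fF p) ∈ D0 := by
    intro α hα fα hfα
    have hpr : RepIn (fun _ => True) D0 A0 (ZFSet.pair α (j α)) (fun p => ZFSet.pair (fα p) α) :=
      pair_rep hUF0 hcode0 hfα (hjrep α)
    have hm := mem_fwd hUF0 hcode0 hpr hfF (hpairF.2 ⟨hα, rfl⟩)
    erw [memSet_eq] at hm
    exact hm
  have hFback : ∀ (u w : Fn A0) (bu bw : ZS), RepIn (fun _ => True) D0 A0 bu u →
      RepIn (fun _ => True) D0 A0 bw w →
      LS A0 (fun p => ZFSet.pair (u p) (w p) ∈ fF p) ∈ D0 →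
      bu ∈ lam ∧ bw = j bu := by
    intro u w bu bw hu hw hls
    refine hpairF.1 (mem_back (pair_rep hUF0 hcode0 hu hw) hfF (hcode0 _) ?_)
    erw [memSet_eq]
    exact hls
  set sUU : Fn A0 := fun p => (⋃₀ (⋃₀ (fF p)) : ZFSet) with hsUUdef
  have hsUU : RepIn (fun _ => True) D0 A0 (⋃₀ (⋃₀ F) : ZFSet) sUU :=
    sUnion_rep hUF0 hcode0 (sUnion_rep hUF0 hcode0 hfF)
  have hpair_out : ∀ {a b c : ZS}, ZFSet.pair a b ∈ c →
      a ∈ (⋃₀ (⋃₀ c) : ZFSet) ∧ b ∈ (⋃₀ (⋃₀ c) : ZFSet) := by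
    intro a b c hc
    have h1 : ({a, b} : ZFSet) ∈ ZFSet.pair a b :=
      ZFSet.mem_insert_of_mem _ (ZFSet.mem_insert _ _)
    have h2 : ({a, b} : ZFSet) ∈ (⋃₀ c : ZFSet) := ZFSet.mem_sUnion_of_mem h1 hc
    exact ⟨ZFSet.mem_sUnion_of_mem (ZFSet.mem_insert _ _) h2,
      ZFSet.mem_sUnion_of_mem (ZFSet.mem_insert_of_mem _ (ZFSet.mem_insert _ _)) h2⟩
  -- representation of subsets of γ
  have hXrep : ∀ X : ZS, X ⊆ γ →
      RepIn (fun _ => True) D0 A0 X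
        (fun p => ZFSet.sep (fun β => ∃ y, ZFSet.pair β y ∈ fF p ∧ y ∈ X) (fγ p)) := by
    intro X hXγ
    refine repin_iff.2 ⟨fun β hβ => ?_, fun g hgc hgm => ?_⟩
    · have hβγ : β ∈ γ := hXγ hβ
      obtain ⟨fβ, hfβ⟩ := hMrep (hMord (isOrd_mem hγ hβγ))
      refine ⟨fβ, hcode0 _, ?_, hfβ⟩
      have h1 := mem_fwd hUF0 hcode0 hfβ hfγ hβγ
      rw [memSet_eq] at h1
      have h2 := hFmem (hγlam hβγ) fβ hfβ
      erw [memSet_eq]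
      refine LS_mono hUF0 (LS_and hUF0 h1 h2) (fun p hp => ?_)
      exact ZFSet.mem_sep.2 ⟨hp.1, β, hp.2, hβ⟩
    · erw [memSet_eq] at hgm
      have hg1 : memSet A0 g fγ ∈ D0 := by
        rw [memSet_eq]
        exact LS_mono hUF0 hgm (fun p hp => (ZFSet.mem_sep.1 hp).1)
      obtain ⟨b, hbγ, hbr⟩ := (repin_iff.1 hfγ).2 g hgc hg1
      set w : Fn A0 := fun p =>
        if hw : ∃ y, ZFSet.pair (g p) y ∈ fF p ∧ y ∈ X then Classical.choose hw else ∅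
        with hwdef
      have hwspec : LS A0 (fun p => ZFSet.pair (g p) (w p) ∈ fF p ∧ w p ∈ X) ∈ D0 := by
        refine LS_mono hUF0 hgm (fun p hp => ?_)
        obtain ⟨-, hy⟩ := ZFSet.mem_sep.1 hp
        simp only [hwdef, dif_pos hy]
        exact Classical.choose_spec hy
      obtain ⟨c, hcUU, hcr⟩ := (repin_iff.1 hsUU).2 w (hcode0 _) (by
        rw [memSet_eq]
        exact LS_mono hUF0 hwspec (fun p hp => (hpair_out hp.1).2))
      obtain ⟨hblam, hcj⟩ := hFback g w b c hbr hcr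
        (LS_mono hUF0 hwspec (fun p hp => hp.1))
      have hcX : c ∈ j X := by
        refine mem_back hcr (hjrep X) (hcode0 _) ?_
        erw [memSet_eq]
        exact LS_mono hUF0 hwspec (fun p hp => hp.2)
      rw [hcj] at hcX
      exact ⟨b, hjmem' hcX, hbr⟩
  -- representation of the powerset of γ
  set repOf : ZS → Fn A0 := fun β => if h : M β then Classical.choose (hMrep h) else fun _ => ∅
    with hrepOfdef
  have hrepOf : ∀ {β : ZS}, M β → RepIn (fun _ => True) D0 A0 β (repOf β) := by
    intro β h
    simp only [hrepOfdef, dif_pos h]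
    erw [dif_pos h]; exact Classical.choose_spec (hMrep h)
  have hPrep : RepIn (fun _ => True) D0 A0 (ZFSet.powerset γ)
      (fun p => ZFSet.powerset (fγ p)) := by
    refine repin_iff.2 ⟨fun X hX => ?_, fun g hgc hgm => ?_⟩
    · have hXγ : X ⊆ γ := ZFSet.mem_powerset.1 hX
      refine ⟨_, hcode0 _, ?_, hXrep X hXγ⟩
      erw [memSet_eq]
      refine LS_of_all hUF0 (fun p => ?_)
      exact ZFSet.mem_powerset.2 (fun z hz => (ZFSet.mem_sep.1 hz).1)
    · erw [memSet_eq] at hgm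
      refine ⟨ZFSet.sep (fun β => memSet A0 (repOf β) g ∈ D0) γ, ?_, ?_⟩
      · exact ZFSet.mem_powerset.2 (fun z hz => (ZFSet.mem_sep.1 hz).1)
      · refine repin_iff.2 ⟨fun β hβ => ?_, fun h hhc hhm => ?_⟩
        · obtain ⟨hβγ, hβm⟩ := ZFSet.mem_sep.1 hβ
          exact ⟨repOf β, hcode0 _, hβm, hrepOf (hMord (isOrd_mem hγ hβγ))⟩
        · have hhγ : memSet A0 h fγ ∈ D0 := by
            rw [memSet_eq] at hhm ⊢
            refine LS_mono hUF0 (LS_and hUF0 hhm hgm) (fun p hp => ?_)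
            exact ZFSet.mem_powerset.1 hp.2 hp.1
          obtain ⟨β, hβγ, hβr⟩ := (repin_iff.1 hfγ).2 h hhc hhγ
          have hag := rep_agree hUF0 hcode0 hβr (hrepOf (hMord (isOrd_mem hγ hβγ)))
          have hm : memSet A0 (repOf β) g ∈ D0 := by
            rw [agreeSet_eq] at hag
            rw [memSet_eq] at hhm ⊢
            exact LS_mono hUF0 (LS_and hUF0 hag hhm) (fun p hp => hp.1 ▸ hp.2)
          exact ⟨β, ZFSet.mem_sep.2 ⟨hβγ, hm⟩, hβr⟩
  -- j[lam] is in M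
  have hZrep : RepIn (fun _ => True) D0 A0 (zimage j lam)
      (fun p => ZFSet.sep (fun y => ∃ x, ZFSet.pair x y ∈ fF p) (sUU p)) := by
    refine repin_iff.2 ⟨fun b hb => ?_, fun g hgc hgm => ?_⟩
    · obtain ⟨α, hα, rfl⟩ := mem_zimage.1 hb
      obtain ⟨fα, hfα⟩ := hMrep (hMord (isOrd_mem hlamOrd hα))
      refine ⟨fun _ => α, hcode0 _, ?_, hjrep α⟩
      erw [memSet_eq]
      refine LS_mono hUF0 (hFmem hα fα hfα) (fun p hp => ?_)
      exact ZFSet.mem_sep.2 ⟨(hpair_out hp).2, fα p, hp⟩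
    · erw [memSet_eq] at hgm
      set w : Fn A0 := fun p =>
        if hw : ∃ x, ZFSet.pair x (g p) ∈ fF p then Classical.choose hw else ∅ with hwdef
      have hwspec : LS A0 (fun p => ZFSet.pair (w p) (g p) ∈ fF p) ∈ D0 := by
        refine LS_mono hUF0 hgm (fun p hp => ?_)
        obtain ⟨-, hx⟩ := ZFSet.mem_sep.1 hp
        simp only [hwdef, dif_pos hx]
        exact Classical.choose_spec hx
      obtain ⟨bw, hbwUU, hbwr⟩ := (repin_iff.1 hsUU).2 w (hcode0 _) (by
        rw [memSet_eq]
        exact LS_mono hUF0 hwspec (fun p hp => (hpair_out hp).1))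
      obtain ⟨bg, hbgUU, hbgr⟩ := (repin_iff.1 hsUU).2 g hgc (by
        rw [memSet_eq]
        exact LS_mono hUF0 hgm (fun p hp => (ZFSet.mem_sep.1 hp).1))
      obtain ⟨hbwlam, hbgj⟩ := hFback w g bw bg hbwr hbgr hwspec
      exact ⟨bg, mem_zimage.2 ⟨bw, hbwlam, hbgj.symm⟩, hbgr⟩
  have hMzimg : M (zimage j lam) := (hMchar _).2 ⟨_, hcode0 _, hZrep⟩
  -- extract the representing function of k ξ from the seed hypothesis
  obtain ⟨A1, E, hMA1, hME, hccE, hNchar, hirep⟩ := hsemi.internal1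
  have hUFE : IsUF E A1 := hccE.1
  obtain ⟨g0, hg0c, hg0T, hg0r⟩ := (repin_iff.1 (hirep _ hMzimg)).1 (k ξ) hseed
  obtain ⟨G, hMG, hGcode⟩ := hg0c
  have hg0c' : Coded M A1 g0 := ⟨G, hMG, hGcode⟩
  erw [memSet_eq] at hg0T
  -- elementarity of k for membership
  obtain ⟨hkmap, hkelem⟩ := hsemi.elem0
  have hkmem : ∀ {a b : ZS} (ha : InUlt D γ a) (hb : InUlt D γ b), k a ∈ k b ↔ a ∈ b := by
    intro a b ha hb
    have hres := hkelem 2 (Language.Relations.formula₂ (PUnit.unit : setLang.Relations 2)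
      (Language.Term.var (0 : Fin 2)) (Language.Term.var (1 : Fin 2)))
      ![⟨a, ha⟩, ⟨b, hb⟩]
    exact hres
  -- D-level facts
  have hUFD : IsUF D γ := hD.1
  have hcodeγ : ∀ g : Fn γ, Coded (fun _ => True) γ g := fun g => by
    obtain ⟨G', hG'⟩ := codes_exist γ g
    exact ⟨G', trivial, hG'⟩
  have hseedmem : ∀ Z : ZS, ξ ∈ jD Z ↔ ZFSet.sep (fun z => z ∈ Z) γ ∈ D := by
    intro Z
    have hsep : ZFSet.sep (fun z => z ∈ Z) γ = memSet γ (fun p => p.1) (fun _ => Z) := by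
      erw [memSet_eq]
      apply ZFSet.ext
      intro z
      rw [ZFSet.mem_sep, mem_LS]
      exact ⟨fun ⟨h1, h2⟩ => ⟨h1, h2⟩, fun ⟨h1, h2⟩ => ⟨h1, h2⟩⟩
    constructor
    · intro h
      rw [hsep]
      exact mem_fwd hUFD hcodeγ hξ (hjD Z) h
    · intro h
      rw [hsep] at h
      exact mem_back hξ (hjD Z) (hcodeγ _) h
  have hcomm := hsemi.comm
  have hiback : ∀ Z : ZS, LS A1 (fun p => g0 p ∈ j Z) ∈ E → ξ ∈ jD Z := by
    intro Z hls
    have h1 : k ξ ∈ i (j Z) := by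
      refine mem_back hg0r (hirep _ (hMj Z)) hg0c' ?_
      erw [memSet_eq]
      exact hls
    rw [← hcomm Z] at h1
    exact (hkmem ⟨_, hξ⟩ ⟨_, hjD Z⟩).1 h1
  -- the set S1 X and the key characterization of D
  set S1 : ZS → ZS := fun X => ZFSet.sep
      (fun b => ∃ α, α ∈ X ∧ ∃ y, ZFSet.pair α y ∈ F ∧ ZFSet.pair b y ∈ G) A1 with hS1def
  have hGfwd : ∀ {b y : ZS}, ZFSet.pair b y ∈ G → ∃ hb : b ∈ A1, y = g0 ⟨b, hb⟩ := by
    intro b y hby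
    obtain ⟨x, hx, hpx⟩ := hGcode.1 _ hby
    obtain ⟨rfl, h2⟩ := ZFSet.pair_inj.1 hpx
    exact ⟨hx, h2⟩
  have hS1eq : ∀ X : ZS, X ⊆ lam → S1 X = LS A1 (fun p => ∃ α, α ∈ X ∧ g0 p = j α) := by
    intro X hXlam
    apply ZFSet.ext
    intro b
    simp only [hS1def]
    rw [ZFSet.mem_sep, mem_LS]
    constructor
    · rintro ⟨hbA1, α, hαX, y, hyF, hyG⟩
      obtain ⟨hαlam, rfl⟩ := hpairF.1 hyF
      obtain ⟨hb', hy'⟩ := hGfwd hyG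
      exact ⟨hbA1, α, hαX, hy'.symm⟩
    · rintro ⟨hbA1, α, hαX, hgj⟩
      refine ⟨hbA1, α, hαX, j α, hpairF.2 ⟨hXlam hαX, rfl⟩, ?_⟩
      rw [← hgj]
      exact hGcode.2 b hbA1
  have hdag : ∀ X : ZS, X ⊆ γ → (X ∈ D ↔ S1 X ∈ E) := by
    intro X hXγ
    have hXlam : X ⊆ lam := fun z hz => hγlam (hXγ hz)
    rw [hS1eq X hXlam]
    constructor
    · intro hXD
      by_contra hnot
      have hcomp : LS A1 (fun p => ¬ ∃ α, α ∈ X ∧ g0 p = j α) ∈ E :=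
        (LS_total hUFE _).resolve_left hnot
      set Z : ZS := ZFSet.sep (fun z => z ∉ X) lam with hZdef
      have hls : LS A1 (fun p => g0 p ∈ j Z) ∈ E := by
        refine LS_mono hUFE (LS_and hUFE hcomp hg0T) (fun p hp => ?_)
        obtain ⟨α, hα, hgp⟩ := mem_zimage.1 hp.2
        have hαX : α ∉ X := fun hin => hp.1 ⟨α, hin, hgp.symm⟩
        rw [← hgp]
        exact hjmem (ZFSet.mem_sep.2 ⟨hα, hαX⟩)
      have hsepZ := (hseedmem Z).1 (hiback Z hls)
      refine hUFD.empty_not_mem ?_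
      have hint := hUFD.inter_mem _ hXD _ hsepZ
      have he : X ∩ ZFSet.sep (fun z => z ∈ Z) γ = ∅ := by
        apply ZFSet.ext
        intro z
        simp only [ZFSet.mem_inter, ZFSet.mem_sep, ZFSet.notMem_empty, iff_false]
        rintro ⟨hzX, -, hzZ⟩
        rw [hZdef, ZFSet.mem_sep] at hzZ
        exact hzZ.2 hzX
      rw [he] at hint
      exact hint
    · intro hS
      have hls : LS A1 (fun p => g0 p ∈ j X) ∈ E := by
        refine LS_mono hUFE hS (fun p hp => ?_)
        obtain ⟨α, hα, hgp⟩ := hp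
        rw [hgp]
        exact hjmem hα
      have hsx := (hseedmem X).1 (hiback X hls)
      have hXeq : ZFSet.sep (fun z => z ∈ X) γ = X := by
        apply ZFSet.ext
        intro z
        rw [ZFSet.mem_sep]
        exact ⟨fun h => h.2, fun h => ⟨hXγ h, h⟩⟩
      rwa [hXeq] at hsx
  -- internalization of S1
  obtain ⟨fA1, hfA1⟩ := hMrep hMA1
  obtain ⟨fG, hfG⟩ := hMrep hMG
  obtain ⟨fE, hfE⟩ := hMrep hME
  have hSrep : ∀ (Y : ZS) (gY : Fn A0), Y ⊆ γ → RepIn (fun _ => True) D0 A0 Y gY →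
      RepIn (fun _ => True) D0 A0 (S1 Y)
        (fun p => ZFSet.sep (fun b => ∃ α, α ∈ gY p ∧
          ∃ y, ZFSet.pair α y ∈ fF p ∧ ZFSet.pair b y ∈ fG p) (fA1 p)) := by
    intro Y gY hYγ hgY
    refine repin_iff.2 ⟨fun b hb => ?_, fun h hhc hhm => ?_⟩
    · rw [hS1def] at hb
      obtain ⟨hbA1, α, hαY, y, hyF, hyG⟩ := ZFSet.mem_sep.1 hb
      obtain ⟨hαlam, rfl⟩ := hpairF.1 hyF
      obtain ⟨fb, hfb⟩ := hMrep (hMtrans hMA1 hbA1)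
      obtain ⟨fα, hfα⟩ := hMrep (hMord (isOrd_mem hγ (hYγ hαY)))
      refine ⟨fb, hcode0 _, ?_, hfb⟩
      have h1 := mem_fwd hUF0 hcode0 hfb hfA1 hbA1
      have h2 := mem_fwd hUF0 hcode0 hfα hgY hαY
      have h3 := hFmem hαlam fα hfα
      have h4 := mem_fwd hUF0 hcode0 (pair_rep hUF0 hcode0 hfb (hjrep α)) hfG hyG
      erw [memSet_eq] at h1 h2 h4 ⊢
      refine LS_mono hUF0 (LS_and hUF0 h1 (LS_and hUF0 h2 (LS_and hUF0 h3 h4)))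
        (fun p hp => ?_)
      exact ZFSet.mem_sep.2 ⟨hp.1, fα p, hp.2.1, α, hp.2.2.1, hp.2.2.2⟩
    · erw [memSet_eq] at hhm
      have hh1 : memSet A0 h fA1 ∈ D0 := by
        rw [memSet_eq]
        exact LS_mono hUF0 hhm (fun p hp => (ZFSet.mem_sep.1 hp).1)
      obtain ⟨b, hbA1, hbr⟩ := (repin_iff.1 hfA1).2 h hhc hh1
      set wα : Fn A0 := fun p => if hw : ∃ α, α ∈ gY p ∧
          ∃ y, ZFSet.pair α y ∈ fF p ∧ ZFSet.pair (h p) y ∈ fG p then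
          Classical.choose hw else ∅ with hwαdef
      have hwαspec : LS A0 (fun p => wα p ∈ gY p ∧
          ∃ y, ZFSet.pair (wα p) y ∈ fF p ∧ ZFSet.pair (h p) y ∈ fG p) ∈ D0 := by
        refine LS_mono hUF0 hhm (fun p hp => ?_)
        obtain ⟨-, hw⟩ := ZFSet.mem_sep.1 hp
        simp only [hwαdef, dif_pos hw]
        exact Classical.choose_spec hw
      set wy : Fn A0 := fun p => if hw : ∃ y, ZFSet.pair (wα p) y ∈ fF p ∧
          ZFSet.pair (h p) y ∈ fG p then Classical.choose hw else ∅ with hwydef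
      have hwyspec : LS A0 (fun p => wα p ∈ gY p ∧
          ZFSet.pair (wα p) (wy p) ∈ fF p ∧ ZFSet.pair (h p) (wy p) ∈ fG p) ∈ D0 := by
        refine LS_mono hUF0 hwαspec (fun p hp => ⟨hp.1, ?_⟩)
        simp only [hwydef, dif_pos hp.2]
        exact Classical.choose_spec hp.2
      obtain ⟨α, hαY, hαr⟩ := (repin_iff.1 hgY).2 wα (hcode0 _) (by
        rw [memSet_eq]
        exact LS_mono hUF0 hwyspec (fun p hp => hp.1))
      obtain ⟨cy, hcyUU, hcyr⟩ := (repin_iff.1 hsUU).2 wy (hcode0 _) (by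
        rw [memSet_eq]
        exact LS_mono hUF0 hwyspec (fun p hp => (hpair_out hp.2.1).2))
      obtain ⟨hαlam, hcyj⟩ := hFback wα wy α cy hαr hcyr
        (LS_mono hUF0 hwyspec (fun p hp => hp.2.1))
      have hbG : ZFSet.pair b cy ∈ G := by
        refine mem_back (pair_rep hUF0 hcode0 hbr hcyr) hfG (hcode0 _) ?_
        erw [memSet_eq]
        exact LS_mono hUF0 hwyspec (fun p hp => hp.2.2)
      refine ⟨b, ?_, hbr⟩
      rw [hS1def]
      refine ZFSet.mem_sep.2 ⟨hbA1, α, hαY, cy, ?_, hbG⟩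
      rw [hcyj]
      exact hpairF.2 ⟨hαlam, rfl⟩
  -- the representation of D itself
  have hDrep : RepIn (fun _ => True) D0 A0 D (fun p => ZFSet.sep
      (fun X => ZFSet.sep (fun b => ∃ α, α ∈ X ∧
        ∃ y, ZFSet.pair α y ∈ fF p ∧ ZFSet.pair b y ∈ fG p) (fA1 p) ∈ fE p)
      (ZFSet.powerset (fγ p))) := by
    refine repin_iff.2 ⟨fun X hX => ?_, fun h hhc hhm => ?_⟩
    · have hXγ : X ⊆ γ := hUFD.subsets X hX
      refine ⟨_, hcode0 _, ?_, hXrep X hXγ⟩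
      have hS1E : S1 X ∈ E := (hdag X hXγ).1 hX
      have hm := mem_fwd hUF0 hcode0 (hSrep X _ hXγ (hXrep X hXγ)) hfE hS1E
      erw [memSet_eq] at hm ⊢
      refine LS_mono hUF0 hm (fun p hp => ?_)
      refine ZFSet.mem_sep.2 ⟨?_, hp⟩
      exact ZFSet.mem_powerset.2 (fun z hz => (ZFSet.mem_sep.1 hz).1)
    · erw [memSet_eq] at hhm
      have hm1 : memSet A0 h (fun p => ZFSet.powerset (fγ p)) ∈ D0 := by
        erw [memSet_eq]
        exact LS_mono hUF0 hhm (fun p hp => (ZFSet.mem_sep.1 hp).1)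
      obtain ⟨X, hXpow, hXr⟩ := (repin_iff.1 hPrep).2 h hhc hm1
      have hXγ : X ⊆ γ := ZFSet.mem_powerset.1 hXpow
      have hSE : S1 X ∈ E := by
        refine mem_back (hSrep X h hXγ hXr) hfE (hcode0 _) ?_
        erw [memSet_eq]
        exact LS_mono hUF0 hhm (fun p hp => (ZFSet.mem_sep.1 hp).2)
      exact ⟨X, (hdag X hXγ).2 hSE, hXr⟩
  exact (hMchar D).2 ⟨_, hcode0 _, hDrep⟩

end UAPaper
end

section
/- (Kunen) For a regular uncountable cardinal λ and a stationary set S ⊆ λ, ◇⁻(S) is equivalent to ◇(S). -/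
open FirstOrder

namespace UAPaper

open Cardinal


section Helpers
universe u

open Cardinal Ordinal

private lemma lt_succ_self' (x : Ordinal.{u}) : x < x + 1 := by
  rw [Ordinal.add_one_eq_succ]; exact Order.lt_succ x

/-- Key closure-point lemma: below a regular uncountable cardinal, every function has
arbitrarily large closure points. -/
private lemma auxClosure {lam : Cardinal.{u}} (hreg : lam.IsRegular) (hunc : Cardinal.aleph0 < lam)
    (G : Ordinal → Ordinal) (hG : ∀ γ < lam.ord, G γ < lam.ord) :
    ∀ α < lam.ord, ∃ β, α < β ∧ β < lam.ord ∧ ∀ γ < β, G γ < β := by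
  have hlim : Order.IsSuccLimit (lam.ord) := Cardinal.isSuccLimit_ord hreg.aleph0_le
  have hsucc : ∀ x : Ordinal, x < lam.ord → x + 1 < lam.ord := by
    intro x hx; rw [Ordinal.add_one_eq_succ]; exact hlim.succ_lt hx
  intro α hα
  set step : Ordinal → Ordinal := fun δ =>
    Ordinal.bsup.{u,u} (δ + 1) (fun γ _ => max (γ + 1) (G γ)) with hstepdef
  have hstep_lt : ∀ δ, δ < lam.ord → step δ < lam.ord := by
    intro δ hδ
    refine Ordinal.bsup_lt_ord ?_ ?_
    · rw [hreg.cof_eq]; exact Cardinal.lt_ord.1 (hsucc δ hδ)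
    · intro γ hγ
      have hγΛ : γ < lam.ord := by
        have : γ ≤ δ := by
          rw [Ordinal.add_one_eq_succ, Order.lt_succ_iff] at hγ; exact hγ
        exact lt_of_le_of_lt this hδ
      exact max_lt (hsucc γ hγΛ) (hG γ hγΛ)
  have hstep_ge : ∀ δ, δ + 1 ≤ step δ :=
    fun δ => le_trans (le_max_left _ _) (Ordinal.le_bsup _ δ (lt_succ_self' δ))
  set a : ℕ → Ordinal := fun n => Nat.rec α (fun _ ih => step ih) n with hadef
  have ha0 : a 0 = α := rfl
  have haS : ∀ n, a (n + 1) = step (a n) := fun n => rfl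
  have haΛ : ∀ n, a n < lam.ord := by
    intro n; induction n with
    | zero => exact hα
    | succ n ih => rw [haS]; exact hstep_lt _ ih
  have hmono : ∀ n, a n < a (n + 1) := by
    intro n; rw [haS]
    exact lt_of_lt_of_le (lt_succ_self' (a n)) (hstep_ge (a n))
  have hβΛ : iSup a < lam.ord := by
    refine Cardinal.iSup_lt_ord_lift_of_isRegular hreg ?_ haΛ
    simpa using hunc
  have hlt : ∀ n, a n < iSup a :=
    fun n => lt_of_lt_of_le (hmono n) (Ordinal.le_iSup a (n + 1))
  refine ⟨iSup a, ?_, hβΛ, ?_⟩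
  · have := hlt 0; rwa [ha0] at this
  · intro γ hγ
    obtain ⟨n, hn⟩ := Ordinal.lt_iSup_iff.1 hγ
    have h1 : max (γ + 1) (G γ) ≤ step (a n) :=
      Ordinal.le_bsup _ γ (hn.trans (lt_succ_self' (a n)))
    have h2 : step (a n) < iSup a := by rw [← haS]; exact hlt (n + 1)
    exact lt_of_le_of_lt (le_trans (le_max_right _ _) h1) h2

private noncomputable def bsup2 (F : Ordinal.{u} → Ordinal.{u} → Ordinal.{u}) (γ : Ordinal.{u}) :
    Ordinal.{u} :=
  Ordinal.bsup.{u,u} (γ + 1) fun ξ _ => Ordinal.bsup.{u,u} (γ + 1) fun η _ => F ξ η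

private lemma le_bsup2 (F : Ordinal.{u} → Ordinal.{u} → Ordinal.{u}) {ξ η γ : Ordinal.{u}}
    (h1 : ξ ≤ γ) (h2 : η ≤ γ) : F ξ η ≤ bsup2 F γ := by
  have hξ : ξ < γ + 1 := lt_of_le_of_lt h1 (lt_succ_self' γ)
  have hη : η < γ + 1 := lt_of_le_of_lt h2 (lt_succ_self' γ)
  exact le_trans (Ordinal.le_bsup _ η hη) (Ordinal.le_bsup _ ξ hξ)

private lemma bsup2_lt {lam : Cardinal.{u}} {F : Ordinal.{u} → Ordinal.{u} → Ordinal.{u}}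
    {γ : Ordinal.{u}} (hcard : (γ + 1).card < lam.ord.cof)
    (hF : ∀ ξ ≤ γ, ∀ η ≤ γ, F ξ η < lam.ord) : bsup2 F γ < lam.ord := by
  refine Ordinal.bsup_lt_ord hcard ?_
  intro ξ hξ
  refine Ordinal.bsup_lt_ord hcard ?_
  intro η hη
  rw [Ordinal.add_one_eq_succ, Order.lt_succ_iff] at hξ hη
  exact hF ξ hξ η hη

end Helpers

set_option maxHeartbeats 2000000 in
/-- Kunen: `◇⁻(S)` is equivalent to `◇(S)`. -/
theorem statement9 (lam : Cardinal) (hreg : lam.IsRegular) (hunc : Cardinal.aleph0 < lam)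
    (S : Set Ordinal) (hstat : IsStationary lam.ord S) :
    DiamondMinus lam.ord S ↔ Diamond lam.ord S := by
  classical
  constructor
  · -- `◇⁻(S) → ◇(S)`
    rintro ⟨𝒜, hA1, hA2, hA3⟩
    have hΛlim : Order.IsSuccLimit (lam.ord) := Cardinal.isSuccLimit_ord hreg.aleph0_le
    have hsucc : ∀ x : Ordinal, x < lam.ord → x + 1 < lam.ord := by
      intro x hx; rw [Ordinal.add_one_eq_succ]; exact hΛlim.succ_lt hx
    -- a pairing function `p` on the ordinals below `lam.ord`
    have hcard : #(↥(Set.Iio lam.ord) × ↥(Set.Iio lam.ord)) = #(↥(Set.Iio lam.ord)) := by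
      rw [Cardinal.mk_prod, Cardinal.lift_id, Ordinal.mk_Iio_ordinal, Cardinal.card_ord,
        ← Cardinal.lift_mul, Cardinal.mul_eq_self hreg.aleph0_le]
    obtain ⟨e⟩ := Cardinal.eq.1 hcard
    set p : Ordinal → Ordinal → Ordinal := fun ξ η =>
      if h : ξ < lam.ord ∧ η < lam.ord then (e (⟨ξ, h.1⟩, ⟨η, h.2⟩) : Ordinal) else 0 with hpdef
    have hp1 : ∀ ξ η, ξ < lam.ord → η < lam.ord → p ξ η < lam.ord := by
      intro ξ η h1 h2
      simp only [hpdef, dif_pos (⟨h1, h2⟩ : ξ < lam.ord ∧ η < lam.ord)]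
      exact (e (⟨ξ, h1⟩, ⟨η, h2⟩)).2
    have hp2 : ∀ ξ η ξ' η', ξ < lam.ord → η < lam.ord → ξ' < lam.ord → η' < lam.ord →
        p ξ η = p ξ' η' → ξ = ξ' ∧ η = η' := by
      intro ξ η ξ' η' h1 h2 h3 h4 heq
      simp only [hpdef, dif_pos (⟨h1, h2⟩ : ξ < lam.ord ∧ η < lam.ord),
        dif_pos (⟨h3, h4⟩ : ξ' < lam.ord ∧ η' < lam.ord)] at heq
      have h5 := e.injective (Subtype.ext heq)
      rw [Prod.ext_iff] at h5
      exact ⟨congrArg Subtype.val h5.1, congrArg Subtype.val h5.2⟩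
    -- enumerations of the families `𝒜 α`
    have hEex : ∀ α : Ordinal, ∃ Eα : Ordinal → Set Ordinal,
        ((𝒜 α).Nonempty → #(𝒜 α) ≤ #(Set.Iio α) →
          ∀ a ∈ 𝒜 α, ∃ ξ, ξ < α ∧ Eα ξ = a) := by
      intro α
      by_cases hle : #(𝒜 α) ≤ #(Set.Iio α)
      · obtain ⟨f⟩ := (Cardinal.le_def _ _).1 hle
        refine ⟨fun ξ => if h : ∃ a : (𝒜 α), (f a : Ordinal) = ξ then
          (h.choose : Set Ordinal) else ∅, fun _ _ a ha => ?_⟩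
        have hex : ∃ b : (𝒜 α), (f b : Ordinal) = (f ⟨a, ha⟩ : Ordinal) := ⟨⟨a, ha⟩, rfl⟩
        refine ⟨(f ⟨a, ha⟩ : Ordinal), (f ⟨a, ha⟩).2, ?_⟩
        simp only [dif_pos hex]
        have h6 : hex.choose = ⟨a, ha⟩ := f.injective (Subtype.ext hex.choose_spec)
        rw [h6]
      · exact ⟨fun _ => ∅, fun _ h => absurd h hle⟩
    choose E hE using hEex
    set Acand : Ordinal → Ordinal → Set Ordinal :=
      fun ξ α => {β | β < α ∧ p ξ β ∈ E α ξ} with hAcanddef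
    by_contra hnd
    have hfail : ∀ ξ : Ordinal, ∃ X : Set Ordinal, X ⊆ Set.Iio lam.ord ∧
        ∃ C : Set Ordinal, IsClub lam.ord C ∧
          ∀ α, α ∈ S → α ∈ C → X ∩ Set.Iio α ≠ Acand ξ α := by
      intro ξ
      by_contra hξ
      push_neg at hξ
      refine hnd ⟨Acand ξ, fun α _ β hβ => hβ.1, fun X hX => ⟨fun α hα => hstat.1 α hα.1, ?_⟩⟩
      intro C hC
      obtain ⟨α, hαS, hαC, heq⟩ := hξ X hX C hC
      exact ⟨α, ⟨hαS, heq⟩, hαC⟩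
    choose X hXsub C hCclub hCne using hfail
    set Y : Set Ordinal := {y | ∃ ξ, ξ < lam.ord ∧ ∃ β ∈ X ξ, y = p ξ β} with hYdef
    have hYsub : Y ⊆ Set.Iio lam.ord := by
      rintro y ⟨ξ, hξ, β, hβ, rfl⟩
      exact hp1 ξ β hξ (hXsub ξ hβ)
    obtain ⟨hT1, hT2⟩ := hA3 Y hYsub
    have hgex : ∀ ξ η : Ordinal, ∃ δ, η < lam.ord → δ ∈ C ξ ∧ η < δ := by
      intro ξ η
      by_cases hη : η < lam.ord
      · obtain ⟨δ, hδ, hlt⟩ := (hCclub ξ).2.1 η hη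
        exact ⟨δ, fun _ => ⟨hδ, hlt⟩⟩
      · exact ⟨0, fun h => absurd h hη⟩
    choose g hg using hgex
    set D : Set Ordinal := {α | α < lam.ord ∧ (∀ ξ < α, ∀ η < α, p ξ η < α) ∧
      ∀ ξ < α, α ∈ C ξ} with hDdef
    have hDclub : IsClub lam.ord D := by
      refine ⟨fun α hα => hα.1, ?_, ?_⟩
      · -- unbounded
        intro α hα
        set G : Ordinal → Ordinal :=
          fun γ => bsup2 (fun ξ η => max (p ξ η + 1) (g ξ η)) γ with hGdef
        have hGlt : ∀ γ < lam.ord, G γ < lam.ord := by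
          intro γ hγ
          refine bsup2_lt ?_ ?_
          · rw [hreg.cof_eq]; exact Cardinal.lt_ord.1 (hsucc γ hγ)
          · intro ξ hξ η hη
            have hξΛ : ξ < lam.ord := lt_of_le_of_lt hξ hγ
            have hηΛ : η < lam.ord := lt_of_le_of_lt hη hγ
            exact max_lt (hsucc _ (hp1 ξ η hξΛ hηΛ)) ((hCclub ξ).1 _ ((hg ξ η hηΛ).1))
        obtain ⟨β, hαβ, hβΛ, hβcl⟩ := auxClosure hreg hunc G hGlt α hα
        have hβpos : (0 : Ordinal) < β := lt_of_le_of_lt (zero_le (a := α)) hαβ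
        refine ⟨β, ⟨hβΛ, ?_, ?_⟩, hαβ⟩
        · intro ξ hξ η hη
          have h1 : p ξ η + 1 ≤ G (max ξ η) :=
            le_trans (le_max_left _ _) (le_bsup2 _ (le_max_left ξ η) (le_max_right ξ η))
          exact lt_of_lt_of_le (lt_succ_self' _)
            (h1.trans (hβcl _ (max_lt hξ hη)).le)
        · intro ξ hξ
          refine (hCclub ξ).2.2 β hβΛ hβpos ?_
          intro γ hγ
          have hγ' : max ξ γ < β := max_lt hξ hγ
          have hγΛ : max ξ γ < lam.ord := hγ'.trans hβΛ
          refine ⟨g ξ (max ξ γ), (hg ξ _ hγΛ).1,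
            lt_of_le_of_lt (le_max_right ξ γ) (hg ξ _ hγΛ).2, ?_⟩
          have h2 : g ξ (max ξ γ) ≤ G (max ξ γ) :=
            le_trans (le_max_right _ _) (le_bsup2 _ (le_max_left ξ γ) (le_refl _))
          exact lt_of_le_of_lt h2 (hβcl _ hγ')
      · -- closed
        intro β hβΛ hβpos hlimpt
        refine ⟨hβΛ, ?_, ?_⟩
        · intro ξ hξ η hη
          obtain ⟨δ, hδD, h1, h2⟩ := hlimpt (max ξ η) (max_lt hξ hη)
          exact lt_trans (hδD.2.1 ξ (lt_of_le_of_lt (le_max_left ξ η) h1) η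
            (lt_of_le_of_lt (le_max_right ξ η) h1)) h2
        · intro ξ hξ
          refine (hCclub ξ).2.2 β hβΛ hβpos ?_
          intro γ hγ
          obtain ⟨δ, hδD, h1, h2⟩ := hlimpt (max ξ γ) (max_lt hξ hγ)
          exact ⟨δ, hδD.2.2 ξ (lt_of_le_of_lt (le_max_left ξ γ) h1),
            lt_of_le_of_lt (le_max_right ξ γ) h1, h2⟩
    obtain ⟨α, hαT, hαD⟩ := hT2 D hDclub
    obtain ⟨hαS, hguess⟩ := hαT
    obtain ⟨ξ, hξα, hEeq⟩ := hE α ⟨_, hguess⟩ (hA2 α hαS) _ hguess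
    have hαΛ : α < lam.ord := hαD.1
    have key : X ξ ∩ Set.Iio α = Acand ξ α := by
      ext β
      simp only [hAcanddef, Set.mem_inter_iff, Set.mem_Iio, Set.mem_setOf_eq]
      constructor
      · rintro ⟨hβX, hβα⟩
        refine ⟨hβα, ?_⟩
        rw [hEeq]
        exact ⟨⟨ξ, hξα.trans hαΛ, β, hβX, rfl⟩, hαD.2.1 ξ hξα β hβα⟩
      · rintro ⟨hβα, hmem⟩
        rw [hEeq] at hmem
        obtain ⟨⟨ξ', hξ', β', hβ', heqp⟩, -⟩ := hmem
        obtain ⟨h1, h2⟩ := hp2 ξ' β' ξ β hξ' (hXsub ξ' hβ') (hξα.trans hαΛ)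
          (hβα.trans hαΛ) heqp.symm
        subst h1; subst h2
        exact ⟨hβ', hβα⟩
    exact hCne ξ α hαS (hαD.2.2 ξ hξα) key
  · -- `◇(S) → ◇⁻(S)`
    rintro ⟨A, hA1, hA2⟩
    refine ⟨fun α => if α = 0 then ∅ else {A α}, ?_, ?_, ?_⟩
    · intro α hα a ha
      by_cases h : α = 0
      · simp only [if_pos h] at ha
        exact absurd ha (Set.notMem_empty a)
      · simp only [if_neg h, Set.mem_singleton_iff] at ha
        rw [ha]; exact hA1 α hα
    · intro α hα
      by_cases h : α = 0
      · simp only [if_pos h]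
        simpa using zero_le _
      · simp only [if_neg h]
        have h0 : (0 : Ordinal) < α := pos_iff_ne_zero.2 h
        calc #({A α} : Set (Set Ordinal)) = 1 := Cardinal.mk_singleton _
          _ ≤ #(Set.Iio α) :=
            Cardinal.one_le_iff_ne_zero.2 (Cardinal.mk_ne_zero_iff.2 ⟨⟨0, h0⟩⟩)
    · intro Xs hXs
      obtain ⟨hs1, hs2⟩ := hA2 Xs hXs
      refine ⟨fun α hα => hstat.1 α hα.1, ?_⟩
      intro Cc hCc
      have hCc' : IsClub lam.ord {α ∈ Cc | 0 < α} := by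
        refine ⟨fun α hα => hCc.1 α hα.1, ?_, ?_⟩
        · intro α hα
          obtain ⟨β, hβ, hαβ⟩ := hCc.2.1 α hα
          exact ⟨β, ⟨hβ, lt_of_le_of_lt (zero_le (a := α)) hαβ⟩, hαβ⟩
        · intro β hβ h0 hl
          refine ⟨hCc.2.2 β hβ h0 ?_, h0⟩
          intro γ hγ
          obtain ⟨δ, hδ, h1, h2⟩ := hl γ hγ
          exact ⟨δ, hδ.1, h1, h2⟩
      obtain ⟨α, hαT, hαC⟩ := hs2 _ hCc'
      obtain ⟨hαS, heq⟩ := hαT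
      have hα0 : α ≠ 0 := ne_of_gt hαC.2
      refine ⟨α, ⟨hαS, ?_⟩, hαC.1⟩
      simp only [if_neg hα0, Set.mem_singleton_iff]
      exact heq


end UAPaper
end
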